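/- The ergodic rate integral (1/ln 2)·∫₀^∞ (1 − F(x))/(1 + x) dx, where F is the CDF of the ISIC near-node SINR, evaluates to the closed form (1/ln 2)·[ (ηρa_n/R_n²)·ln((R_n² + d²)/d²) − ((ηρa_n + d²)/R_n²)·ln(1 + ηρa_n/d²) + ((ηρa_n + d²)/R_n² + 1)·ln(1 + ηρa_n/(R_n² + d²)) ]. -/

import Mathlib

open MeasureTheory

/-- Closed form of the ISIC near-node ergodic rate
`(1/ln 2) ∫₀^∞ (1 − F(x))/(1 + x) dx`. -/
theorem ergodic_rate_near_ISIC (η ρ an Rn d : ℝ)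
    (hη : 0 < η) (hρ : 0 < ρ) (han : 0 < an) (hRn : 0 < Rn) (hd : 0 < d)
    (χ₁ χ₂ : ℝ) (hχ₁ : χ₁ = η * ρ * an / (Rn ^ 2 + d ^ 2)) (hχ₂ : χ₂ = η * ρ * an / d ^ 2)
    (F : ℝ → ℝ)
    (hF : ∀ x : ℝ, 0 ≤ x → F x =
        if x < χ₁ then 0
        else if x < χ₂ then 1 - (η * ρ * an / x - d ^ 2) / Rn ^ 2
        else 1) :
    (1 / Real.log 2) * ∫ x in Set.Ioi (0 : ℝ), (1 - F x) / (1 + x) =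
      (1 / Real.log 2) *
        ((η * ρ * an / Rn ^ 2) * Real.log ((Rn ^ 2 + d ^ 2) / d ^ 2)
          - ((η * ρ * an + d ^ 2) / Rn ^ 2) * Real.log (1 + η * ρ * an / d ^ 2)
          + ((η * ρ * an + d ^ 2) / Rn ^ 2 + 1) *
              Real.log (1 + η * ρ * an / (Rn ^ 2 + d ^ 2))) := by
  set A := η * ρ * an with hA
  have hApos : 0 < A := by positivity
  have hd2 : (0:ℝ) < d ^ 2 := by positivity
  have hRd : (0:ℝ) < Rn ^ 2 + d ^ 2 := by positivity
  have hχ₁pos : 0 < χ₁ := by rw [hχ₁]; positivity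
  have hχ₂pos : 0 < χ₂ := by rw [hχ₂]; positivity
  have hχlt : χ₁ < χ₂ := by
    rw [hχ₁, hχ₂]
    apply div_lt_div_of_pos_left hApos hd2
    nlinarith
  have hχle : χ₁ ≤ χ₂ := hχlt.le
  -- pointwise descriptions of the integrand g x = (1 - F x) / (1 + x)
  set g : ℝ → ℝ := fun x => (1 - F x) / (1 + x) with hg
  have h1 : ∀ x ∈ Set.Ioc (0:ℝ) χ₁, g x = (1 + x)⁻¹ := by
    intro x hx
    have hx0 : (0:ℝ) ≤ x := hx.1.le
    have hxF := hF x hx0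
    rcases lt_or_eq_of_le hx.2 with h | h
    · simp [hg, hxF, h, one_div]
    · have hne : ¬ x < χ₁ := by rw [h]; exact lt_irrefl _
      have hlt2 : x < χ₂ := h ▸ hχlt
      have hFx : F x = 0 := by
        rw [hxF, if_neg hne, if_pos hlt2, h, hχ₁]
        have hAd : A / (A / (Rn ^ 2 + d ^ 2)) = Rn ^ 2 + d ^ 2 := by
          field_simp
        rw [hAd]
        field_simp
        ring
      simp [hg, hFx, one_div]
  have h2 : ∀ x ∈ Set.Ioc χ₁ χ₂, g x = ((Rn ^ 2)⁻¹ * A) * x⁻¹ -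
      ((Rn ^ 2)⁻¹ * (A + d ^ 2)) * (1 + x)⁻¹ := by
    intro x hx
    have hx0 : 0 < x := hχ₁pos.trans hx.1
    have hx1 : (0:ℝ) < 1 + x := by linarith
    have hxF := hF x hx0.le
    have hne : ¬ x < χ₁ := not_lt.mpr hx.1.le
    have hFx : (1 - F x) = (A / x - d ^ 2) / Rn ^ 2 := by
      rcases lt_or_eq_of_le hx.2 with h | h
      · rw [hxF, if_neg hne, if_pos h]; ring
      · have hne2 : ¬ x < χ₂ := by rw [h]; exact lt_irrefl _
        rw [hxF, if_neg hne, if_neg hne2, h, hχ₂]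
        have hAd : A / (A / d ^ 2) = d ^ 2 := by field_simp
        rw [hAd]
        simp
    rw [hg]
    simp only
    rw [hFx]
    field_simp
    ring
  have h3 : ∀ x ∈ Set.Ioi χ₂, g x = 0 := by
    intro x hx
    have hx2 : χ₂ < x := hx
    have hx0 : (0:ℝ) ≤ x := (hχ₂pos.trans hx2).le
    have hne : ¬ x < χ₁ := not_lt.mpr (hχle.trans hx2.le)
    have hne2 : ¬ x < χ₂ := not_lt.mpr hx2.le
    simp [hg, hF x hx0, hne, hne2]
  -- continuous model functions
  have hc1 : ContinuousOn (fun x : ℝ => (1 + x)⁻¹) (Set.Icc (0:ℝ) χ₁) := by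
    apply ContinuousOn.inv₀ (by fun_prop)
    intro x hx; have := hx.1; intro h; linarith
  have hc2 : ContinuousOn (fun x : ℝ => ((Rn ^ 2)⁻¹ * A) * x⁻¹ -
      ((Rn ^ 2)⁻¹ * (A + d ^ 2)) * (1 + x)⁻¹) (Set.Icc χ₁ χ₂) := by
    apply ContinuousOn.sub
    · apply ContinuousOn.mul continuousOn_const
      apply ContinuousOn.inv₀ (by fun_prop)
      intro x hx; have := hx.1; intro h; rw [h] at this; linarith
    · apply ContinuousOn.mul continuousOn_const
      apply ContinuousOn.inv₀ (by fun_prop)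
      intro x hx; have := hx.1; intro h; nlinarith
  -- integrability of g on the pieces
  have hi1 : IntegrableOn g (Set.Ioc (0:ℝ) χ₁) := by
    apply IntegrableOn.congr_fun _ (fun x hx => (h1 x hx).symm) measurableSet_Ioc
    exact (hc1.integrableOn_compact isCompact_Icc).mono_set Set.Ioc_subset_Icc_self
  have hi2 : IntegrableOn g (Set.Ioc χ₁ χ₂) := by
    apply IntegrableOn.congr_fun _ (fun x hx => (h2 x hx).symm) measurableSet_Ioc
    exact (hc2.integrableOn_compact isCompact_Icc).mono_set Set.Ioc_subset_Icc_self
  have hi3 : IntegrableOn g (Set.Ioi χ₂) := by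
    apply IntegrableOn.congr_fun (integrableOn_zero) (fun x hx => (h3 x hx).symm)
      measurableSet_Ioi
  -- split the integral
  have hsplit : ∫ x in Set.Ioi (0:ℝ), g x =
      (∫ x in Set.Ioc (0:ℝ) χ₁, g x) + (∫ x in Set.Ioc χ₁ χ₂, g x) +
        (∫ x in Set.Ioi χ₂, g x) := by
    have hset : Set.Ioi (0:ℝ) = (Set.Ioc 0 χ₁ ∪ Set.Ioc χ₁ χ₂) ∪ Set.Ioi χ₂ := by
      rw [Set.Ioc_union_Ioc_eq_Ioc hχ₁pos.le hχle, Set.Ioc_union_Ioi_eq_Ioi hχ₂pos.le]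
    have hdisj1 : Disjoint (Set.Ioc (0:ℝ) χ₁) (Set.Ioc χ₁ χ₂) := by
      apply Set.disjoint_left.mpr
      intro x hx hx2
      exact absurd hx2.1 (not_lt.mpr hx.2)
    have hdisj2 : Disjoint (Set.Ioc (0:ℝ) χ₁ ∪ Set.Ioc χ₁ χ₂) (Set.Ioi χ₂) := by
      apply Set.disjoint_left.mpr
      intro x hx hx2
      rcases hx with h | h
      · exact absurd (h.2.trans_lt (hχlt.trans hx2)) (lt_irrefl x)
      · exact absurd (h.2.trans_lt hx2) (lt_irrefl x)
    rw [hset, setIntegral_union hdisj2 measurableSet_Ioi (hi1.union hi2) hi3,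
      setIntegral_union hdisj1 measurableSet_Ioc hi1 hi2]
  -- compute each piece
  have e3 : ∫ x in Set.Ioi χ₂, g x = 0 := by
    rw [setIntegral_congr_fun measurableSet_Ioi h3, integral_zero]
  have e1 : ∫ x in Set.Ioc (0:ℝ) χ₁, g x = Real.log (1 + χ₁) := by
    rw [setIntegral_congr_fun measurableSet_Ioc h1,
      ← intervalIntegral.integral_of_le hχ₁pos.le]
    have := intervalIntegral.integral_comp_add_left (a := (0:ℝ)) (b := χ₁)
      (fun x : ℝ => x⁻¹) 1
    rw [this, add_zero, integral_inv (by
      intro h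
      rcases Set.mem_uIcc.mp h with ⟨h1, _⟩ | ⟨_, h2⟩ <;> linarith)]
    rw [div_one]
  have e2 : ∫ x in Set.Ioc χ₁ χ₂, g x =
      ((Rn ^ 2)⁻¹ * A) * Real.log (χ₂ / χ₁) -
        ((Rn ^ 2)⁻¹ * (A + d ^ 2)) * Real.log ((1 + χ₂) / (1 + χ₁)) := by
    rw [setIntegral_congr_fun measurableSet_Ioc h2,
      ← intervalIntegral.integral_of_le hχle]
    have hzero : (0:ℝ) ∉ Set.uIcc χ₁ χ₂ := by
      intro h
      rcases Set.mem_uIcc.mp h with ⟨h1, _⟩ | ⟨h1, _⟩ <;> linarith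
    have hint1 : IntervalIntegrable (fun x : ℝ => ((Rn ^ 2)⁻¹ * A) * x⁻¹) volume χ₁ χ₂ := by
      apply IntervalIntegrable.const_mul
      apply ContinuousOn.intervalIntegrable
      apply ContinuousOn.inv₀ continuousOn_id
      intro x hx h
      simp only [id_eq] at h
      rw [h] at hx; exact hzero hx
    have hint2 : IntervalIntegrable
        (fun x : ℝ => ((Rn ^ 2)⁻¹ * (A + d ^ 2)) * (1 + x)⁻¹) volume χ₁ χ₂ := by
      apply IntervalIntegrable.const_mul
      apply ContinuousOn.intervalIntegrable
      apply ContinuousOn.inv₀ (by fun_prop)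
      intro x hx
      rcases Set.mem_uIcc.mp hx with ⟨h1, _⟩ | ⟨h1, _⟩ <;> (intro h; nlinarith)
    rw [intervalIntegral.integral_sub hint1 hint2,
      intervalIntegral.integral_const_mul, intervalIntegral.integral_const_mul,
      integral_inv hzero]
    have := intervalIntegral.integral_comp_add_left (a := χ₁) (b := χ₂)
      (fun x : ℝ => x⁻¹) 1
    rw [this, integral_inv (by
      intro h
      rcases Set.mem_uIcc.mp h with ⟨h1, _⟩ | ⟨_, h2⟩ <;> linarith)]
  -- assemble
  have hratio : χ₂ / χ₁ = (Rn ^ 2 + d ^ 2) / d ^ 2 := by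
    rw [hχ₁, hχ₂]
    field_simp
  have h1χ₁ : (0:ℝ) < 1 + χ₁ := by linarith
  have h1χ₂ : (0:ℝ) < 1 + χ₂ := by linarith
  have hlogdiv : Real.log ((1 + χ₂) / (1 + χ₁)) = Real.log (1 + χ₂) - Real.log (1 + χ₁) :=
    Real.log_div (by positivity) (by positivity)
  have key : ∫ x in Set.Ioi (0:ℝ), g x =
      (A / Rn ^ 2) * Real.log ((Rn ^ 2 + d ^ 2) / d ^ 2)
        - ((A + d ^ 2) / Rn ^ 2) * Real.log (1 + A / d ^ 2)
        + ((A + d ^ 2) / Rn ^ 2 + 1) * Real.log (1 + A / (Rn ^ 2 + d ^ 2)) := by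
    rw [hsplit, e1, e2, e3, hratio, hlogdiv, ← hχ₁, ← hχ₂]

    have hRn2 : (Rn:ℝ) ^ 2 ≠ 0 := by positivity
    field_simp
    ring
  rw [show (∫ x in Set.Ioi (0:ℝ), (1 - F x) / (1 + x)) = ∫ x in Set.Ioi (0:ℝ), g x from rfl,
    key]
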